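/- For every Young diagram D of size n, the intertwining number ⟨Ind_{S_{Dᵗ}}^{S_n}(sgn), Ind_{S_D}^{S_n}(1)⟩ equals 1, where Dᵗ is the transpose partition. -/

import Mathlib

noncomputable section

open CategoryTheory Equiv

namespace PieriGL

/-- Partial sums of the row lengths of a Young diagram (parts padded with zeros). -/
def psum (D : YoungDiagram) (s : ℕ) : ℕ := ∑ j ∈ Finset.range s, D.rowLen j

/-- The dominance order on Young diagrams: `domLE D E` means `D ⪯ E`, i.e. for all `i`,
`d_1 + ... + d_i ≤ e_1 + ... + e_i`. -/
def domLE (D E : YoungDiagram) : Prop := ∀ i, psum D i ≤ psum E i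

/-- `E - D` is a horizontal strip: `D ⊆ E` and each column of `E` is at most one box longer
than the corresponding column of `D`. -/
def IsHorizontalStrip (D E : YoungDiagram) : Prop :=
  D ≤ E ∧ ∀ j, E.colLen j ≤ D.colLen j + 1

/-- The index of the block (row of the Young diagram) in which `i` lies, for the partition of
`{0, 1, 2, ...}` into consecutive blocks of sizes the rows of `D`. -/
def blk (D : YoungDiagram) (i : ℕ) : ℕ :=
  ((Finset.range (i + 1)).filter fun s => psum D (s + 1) ≤ i).card

/-- The Young subgroup `S_D ≅ S_{d_1} × ... × S_{d_r} ⊆ S_n` attached to a Young diagram `D`: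
the permutations preserving each consecutive block of sizes `d_1, ..., d_r`. -/
def youngSubgroup (n : ℕ) (D : YoungDiagram) : Subgroup (Equiv.Perm (Fin n)) where
  carrier := {σ | ∀ i : Fin n, blk D (σ i) = blk D i}
  one_mem' := by intro i; rfl
  mul_mem' := by
    intro a b ha hb i
    have := ha (b i)
    simp only [Equiv.Perm.mul_apply]
    rw [this, hb i]
  inv_mem' := by
    intro a ha i
    have := ha (a⁻¹ i)
    simpa using this.symm

/-- The Young module `Y_D = Ind_{S_D}^{S_n}(1)`: the complex permutation representation of
`S_n` on the cosets `S_n / S_D`. -/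
def youngModule (n : ℕ) (D : YoungDiagram) : Rep ℂ (Equiv.Perm (Fin n)) :=
  Rep.ofMulAction ℂ (Equiv.Perm (Fin n)) (Equiv.Perm (Fin n) ⧸ youngSubgroup n D)

/-- The intertwining number `⟨π, τ⟩ = dim Hom_G(π, τ)`. -/
def interNum {G : Type} [Monoid G] (π τ : Rep ℂ G) : ℕ :=
  Module.finrank ℂ (π ⟶ τ)

section Induced

variable {G : Type} [Group G] (H : Subgroup G) {W : Type} [AddCommGroup W] [Module ℂ W]

/-- The space of the induced representation `Ind_H^G(ρ)`: functions `f : G → W` with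
`f(hg) = ρ(h) f(g)`. -/
def indSpace (ρ : Representation ℂ H W) : Submodule ℂ (G → W) where
  carrier := {f | ∀ (h : H) (g : G), f (↑h * g) = ρ h (f g)}
  add_mem' := by intro a b ha hb h g; simp [ha h g, hb h g]
  zero_mem' := by intro h g; simp
  smul_mem' := by intro c a ha h g; simp [ha h g]

/-- The induced representation `Ind_H^G(ρ)`, with `G` acting by right translation on
equivariant functions `G → W`. -/
def indRep (ρ : Representation ℂ H W) : Rep ℂ G :=
  Rep.of (X := indSpace H ρ)
    { toFun := fun g =>
        { toFun := fun f => ⟨fun x => f.1 (x * g), fun h x => by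
            have := f.2 h (x * g); simpa [mul_assoc] using this⟩
          map_add' := by intro a b; apply Subtype.ext; funext x; rfl
          map_smul' := by intro c a; apply Subtype.ext; funext x; rfl }
      map_one' := by
        apply LinearMap.ext; intro f; apply Subtype.ext; funext x; simp
      map_mul' := by
        intro g₁ g₂
        apply LinearMap.ext; intro f; apply Subtype.ext; funext x
        simp [mul_assoc] }

end Induced

/-- The sign character of a subgroup of `S_n`, as a one-dimensional representation on `ℂ`. -/
def sgnRep {n : ℕ} (H : Subgroup (Equiv.Perm (Fin n))) : Representation ℂ H ℂ where
  toFun h := algebraMap ℂ (ℂ →ₗ[ℂ] ℂ) ((Equiv.Perm.sign (h : Equiv.Perm (Fin n)) : ℤ) : ℂ)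
  map_one' := by simp
  map_mul' := by
    intro a b
    show algebraMap ℂ (ℂ →ₗ[ℂ] ℂ) _ = algebraMap ℂ (ℂ →ₗ[ℂ] ℂ) _ * algebraMap ℂ (ℂ →ₗ[ℂ] ℂ) _
    rw [← map_mul]
    norm_cast
    rw [Subgroup.coe_mul, map_mul]

/-- `Ind_{S_E}^{S_n}(sgn)`, the representation of `S_n` induced from the sign character of the
Young subgroup `S_E`. -/
def sgnInduced (n : ℕ) (E : YoungDiagram) : Rep ℂ (Equiv.Perm (Fin n)) :=
  indRep (youngSubgroup n E) (sgnRep (youngSubgroup n E))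



open CategoryTheory Matrix
open scoped TensorProduct


section Combinatorics

open Finset

variable (D : YoungDiagram)

lemma psum_mono : Monotone (psum D) := by
  intro a b hab
  exact Finset.sum_le_sum_of_subset (Finset.range_subset_range.2 hab)

lemma psum_succ (s : ℕ) : psum D (s + 1) = psum D s + D.rowLen s :=
  Finset.sum_range_succ _ _

lemma psum_filter (m : ℕ) :
    psum D m = (D.cells.filter fun c => c.1 < m).card := by
  induction m with
  | zero => simp [psum]
  | succ m ih =>
    rw [psum_succ, ih]
    have hsplit : (D.cells.filter fun c => c.1 < m + 1)
        = (D.cells.filter fun c => c.1 < m) ∪ (D.cells.filter fun c => c.1 = m) := by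
      rw [← Finset.filter_or]
      apply Finset.filter_congr
      intro c _
      constructor
      · intro h; omega
      · intro h; omega
    rw [hsplit, Finset.card_union_of_disjoint]
    · congr 1
      rw [YoungDiagram.rowLen_eq_card]
      rfl
    · rw [Finset.disjoint_filter]
      intro c _ h1 h2
      omega

lemma colLen_zero_le_card : D.colLen 0 ≤ D.card := by
  rw [YoungDiagram.colLen_eq_card]
  exact Finset.card_le_card (Finset.filter_subset _ _)

lemma psum_eq_card {m : ℕ} (hm : D.colLen 0 ≤ m) : psum D m = D.card := by
  rw [psum_filter]
  unfold YoungDiagram.card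
  congr 1
  apply Finset.filter_true_of_mem
  intro c hc
  have h1 : c.1 < D.colLen c.2 := YoungDiagram.mem_iff_lt_colLen.1 (by simpa using hc)
  have h2 := D.colLen_anti 0 c.2 (Nat.zero_le _)
  omega

lemma psum_le_card (s : ℕ) : psum D s ≤ D.card := by
  rw [psum_filter]
  exact Finset.card_le_card (Finset.filter_subset _ _)

lemma blk_eq {b i : ℕ} (h1 : psum D b ≤ i) (h2 : i < psum D (b + 1)) :
    blk D i = b := by
  have hrow : 0 < D.rowLen b := by
    rw [psum_succ] at h2; omega
  have hpos : ∀ j ≤ b, 0 < D.rowLen j := fun j hj =>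
    lt_of_lt_of_le hrow (D.rowLen_anti j b hj)
  have hb : b ≤ psum D b := by
    calc b = ∑ _j ∈ Finset.range b, 1 := by simp
    _ ≤ psum D b := Finset.sum_le_sum fun j hj => hpos j (le_of_lt (Finset.mem_range.1 hj))
  have : (Finset.range (i + 1)).filter (fun s => psum D (s + 1) ≤ i) = Finset.range b := by
    ext s
    simp only [Finset.mem_filter, Finset.mem_range]
    constructor
    · rintro ⟨-, hs⟩
      by_contra hsb
      push_neg at hsb
      have : psum D (b + 1) ≤ psum D (s + 1) := psum_mono D (by omega)
      omega
    · intro hs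
      have h3 : psum D (s + 1) ≤ psum D b := psum_mono D (by omega)
      omega
  rw [blk, this, Finset.card_range]

lemma exists_blk {i : ℕ} (hi : i < D.card) :
    ∃ b, psum D b ≤ i ∧ i < psum D (b + 1) := by
  have h0 : psum D (D.colLen 0) = D.card := psum_eq_card D le_rfl
  suffices H : ∀ m, i < psum D m → ∃ b, psum D b ≤ i ∧ i < psum D (b + 1) by
    exact H (D.colLen 0) (h0 ▸ hi)
  intro m
  induction m with
  | zero => intro h; simp [psum] at h
  | succ m ih =>
    intro h
    by_cases hm : psum D m ≤ i
    · exact ⟨m, hm, h⟩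
    · exact ih (by omega)

lemma blk_spec {i : ℕ} (hi : i < D.card) :
    psum D (blk D i) ≤ i ∧ i < psum D (blk D i + 1) := by
  obtain ⟨b, h1, h2⟩ := exists_blk D hi
  rw [blk_eq D h1 h2]
  exact ⟨h1, h2⟩

lemma rowLen_blk_pos {i : ℕ} (hi : i < D.card) : 0 < D.rowLen (blk D i) := by
  have := blk_spec D hi
  rw [psum_succ] at this
  omega

lemma blk_lt_card {i : ℕ} (hi : i < D.card) : blk D i < D.card := by
  have h1 := rowLen_blk_pos D hi
  have h2 : blk D i < D.colLen 0 := by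
    rw [← YoungDiagram.mem_iff_lt_colLen]
    rw [YoungDiagram.mem_iff_lt_rowLen]
    exact h1
  exact lt_of_lt_of_le h2 (colLen_zero_le_card D)

end Combinatorics
section Fibers

open Finset Equiv

lemma transpose_card (D : YoungDiagram) : D.transpose.card = D.card := by
  show ((Equiv.prodComm ℕ ℕ).finsetCongr D.cells).card = D.cells.card
  simp

variable {n : ℕ} {D : YoungDiagram}

lemma blk_fiber_card (hD : D.card = n) (b : ℕ) :
    (Finset.univ.filter fun i : Fin n => blk D i.val = b).card = D.rowLen b := by
  have hcard : (Finset.Ico (psum D b) (psum D (b + 1))).card = D.rowLen b := by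
    rw [Nat.card_Ico, psum_succ]; omega
  rw [← hcard]
  refine Finset.card_bij' (fun i _ => i.val)
    (fun x hx => (⟨x, by
      have := psum_le_card D (b + 1)
      simp only [Finset.mem_Ico] at hx
      omega⟩ : Fin n)) ?_ ?_ ?_ ?_
  · intro i hi
    simp only [Finset.mem_filter, Finset.mem_univ, true_and] at hi
    have hspec := blk_spec D (show i.val < D.card by omega)
    rw [hi] at hspec
    simp only [Finset.mem_Ico]
    exact hspec
  · intro x hx
    have hx' := hx
    simp only [Finset.mem_Ico] at hx'
    simp only [Finset.mem_filter, Finset.mem_univ, true_and]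
    exact blk_eq D hx'.1 hx'.2
  · intro i _; rfl
  · intro x _; rfl

lemma blk_fiber_card' (hD : D.card = n) (g : Equiv.Perm (Fin n)) (b : ℕ) :
    (Finset.univ.filter fun i : Fin n => blk D ((g⁻¹ i).val) = b).card = D.rowLen b := by
  rw [← blk_fiber_card hD b]
  refine Finset.card_nbij' (fun i => g⁻¹ i) (fun i => g i) ?_ ?_ ?_ ?_
  · intro i hi
    simp only [Finset.mem_coe, Finset.mem_filter, Finset.mem_univ, true_and] at hi ⊢
    exact hi
  · intro i hi
    simp only [Finset.mem_coe, Finset.mem_filter, Finset.mem_univ, true_and] at hi ⊢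
    simpa using hi
  · intro i _; simp
  · intro i _; simp

lemma swap_mem_youngSubgroup {i i' : Fin n} (h : blk D i.val = blk D i'.val) :
    Equiv.swap i i' ∈ youngSubgroup n D := by
  intro x
  rcases eq_or_ne x i with rfl | hxi
  · rw [Equiv.swap_apply_left]; exact h.symm
  rcases eq_or_ne x i' with rfl | hxi'
  · rw [Equiv.swap_apply_right]; exact h
  · rw [Equiv.swap_apply_of_ne_of_ne hxi hxi']

/-- The label of `i` under `g` : the pair (transpose-block of `i`, `D`-block of `g⁻¹ i`). -/
def lbl (D : YoungDiagram) {n : ℕ} (g : Equiv.Perm (Fin n)) (i : Fin n) : ℕ × ℕ :=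
  (blk D.transpose i.val, blk D ((g⁻¹ i).val))

lemma exists_sign_fix (g : Equiv.Perm (Fin n)) (hg : ¬ Function.Injective (lbl D g)) :
    ∃ h k, h ∈ youngSubgroup n D.transpose ∧ k ∈ youngSubgroup n D ∧
      Equiv.Perm.sign h = -1 ∧ h * g * k = g := by
  rw [Function.Injective] at hg
  push_neg at hg
  obtain ⟨i, i', hlbl, hne⟩ := hg
  have h1 : blk D.transpose i.val = blk D.transpose i'.val := congrArg Prod.fst hlbl
  have h2 : blk D ((g⁻¹ i).val) = blk D ((g⁻¹ i').val) := congrArg Prod.snd hlbl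
  refine ⟨Equiv.swap i i', Equiv.swap (g⁻¹ i) (g⁻¹ i'),
    swap_mem_youngSubgroup h1, swap_mem_youngSubgroup h2, Equiv.Perm.sign_swap hne, ?_⟩
  ext x
  simp only [Equiv.Perm.mul_apply]
  rcases eq_or_ne x (g⁻¹ i) with rfl | hx1
  · rw [Equiv.swap_apply_left]
    simp
  rcases eq_or_ne x (g⁻¹ i') with rfl | hx2
  · rw [Equiv.swap_apply_right]
    simp
  · rw [Equiv.swap_apply_of_ne_of_ne hx1 hx2,
      Equiv.swap_apply_of_ne_of_ne ?_ ?_]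
    · intro hgi; apply hx1; rw [← hgi]; simp
    · intro hgi; apply hx2; rw [← hgi]; simp

end Fibers
section Counting

open Finset Equiv

lemma card_eq_sum_fibers {α : Type*} (s : Finset α) (f : α → ℕ) (N : ℕ)
    (h : ∀ x ∈ s, f x < N) :
    s.card = ∑ b ∈ Finset.range N, (s.filter fun x => f x = b).card :=
  Finset.card_eq_sum_card_fiberwise (fun x hx => Finset.mem_range.2 (h x hx))

variable {n : ℕ} {D : YoungDiagram}

lemma cell_fst_lt_card {c : ℕ × ℕ} (hc : c ∈ D.cells) : c.1 < D.card := by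
  have h1 : c.1 < D.colLen c.2 := YoungDiagram.mem_iff_lt_colLen.1 (by simpa using hc)
  have h2 := D.colLen_anti 0 c.2 (Nat.zero_le _)
  have h3 := colLen_zero_le_card D
  omega

lemma piece_card (b m : ℕ) :
    (D.cells.filter fun c => c.2 < m ∧ c.1 = b).card = min (D.rowLen b) m := by
  rw [← Finset.card_range (min (D.rowLen b) m)]
  refine Finset.card_nbij' (fun c => c.2) (fun x => (b, x)) ?_ ?_ ?_ ?_
  · intro c hc
    simp only [Finset.mem_coe, Finset.mem_filter, YoungDiagram.mem_cells] at hc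
    obtain ⟨hmem, hm, hb⟩ := hc
    have : c.2 < D.rowLen b := by
      rw [← hb]; exact YoungDiagram.mem_iff_lt_rowLen.1 (by rwa [← Prod.mk.eta (p := c)] at hmem)
    simp only [Finset.mem_coe, Finset.mem_range]
    omega
  · intro x hx
    simp only [Finset.mem_coe, Finset.mem_range, lt_min_iff] at hx
    simp only [Finset.mem_coe, Finset.mem_filter, YoungDiagram.mem_cells]
    exact ⟨YoungDiagram.mem_iff_lt_rowLen.2 hx.1, hx.2, trivial⟩
  · intro c hc
    simp only [Finset.mem_coe, Finset.mem_filter] at hc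
    rw [← hc.2.2]
  · intro x _; rfl

lemma min_sum_eq (hD : D.card = n) (m : ℕ) :
    ∑ b ∈ Finset.range n, min (D.rowLen b) m = psum D.transpose m := by
  have key : psum D.transpose m = (D.cells.filter fun c => c.2 < m).card := by
    rw [psum_filter]
    refine Finset.card_nbij' Prod.swap Prod.swap ?_ ?_ ?_ ?_
    · intro c hc
      simp only [Finset.mem_coe, Finset.mem_filter, YoungDiagram.mem_cells, YoungDiagram.mem_transpose] at hc ⊢
      exact ⟨hc.1, hc.2⟩
    · intro c hc
      simp only [Finset.mem_coe, Finset.mem_filter, YoungDiagram.mem_cells, YoungDiagram.mem_transpose] at hc ⊢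
      exact ⟨by simpa using hc.1, hc.2⟩
    · intro c _; simp
    · intro c _; simp
  rw [key, card_eq_sum_fibers (D.cells.filter fun c => c.2 < m) (fun c => c.1) n
    (fun c hc => by
      have h4 := cell_fst_lt_card (D := D) (Finset.mem_filter.1 hc).1
      show c.1 < n
      omega)]
  refine Finset.sum_congr rfl fun b _ => ?_
  rw [Finset.filter_filter]
  exact (piece_card (D := D) b m).symm

variable (hD : D.card = n) {g : Equiv.Perm (Fin n)} (hg : Function.Injective (lbl D g))

include hD hg

lemma lbl_fiber_snd (b : ℕ) :
    ((Finset.univ.image (lbl D g)).filter fun p => p.2 = b).card = D.rowLen b := by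
  have h : ((Finset.univ.image (lbl D g)).filter fun p => p.2 = b)
      = (Finset.univ.filter fun i : Fin n => blk D ((g⁻¹ i).val) = b).image (lbl D g) := by
    ext p
    simp only [Finset.mem_filter, Finset.mem_image, Finset.mem_univ, true_and]
    constructor
    · rintro ⟨⟨i, rfl⟩, hb⟩
      exact ⟨i, hb, rfl⟩
    · rintro ⟨i, hb, rfl⟩
      exact ⟨⟨i, rfl⟩, hb⟩
  rw [h, Finset.card_image_of_injective _ hg]
  exact blk_fiber_card' hD g b

lemma lbl_fiber_fst (a : ℕ) :
    ((Finset.univ.image (lbl D g)).filter fun p => p.1 = a).card = D.colLen a := by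
  have h : ((Finset.univ.image (lbl D g)).filter fun p => p.1 = a)
      = (Finset.univ.filter fun i : Fin n => blk D.transpose i.val = a).image (lbl D g) := by
    ext p
    simp only [Finset.mem_filter, Finset.mem_image, Finset.mem_univ, true_and]
    constructor
    · rintro ⟨⟨i, rfl⟩, ha⟩
      exact ⟨i, ha, rfl⟩
    · rintro ⟨i, ha, rfl⟩
      exact ⟨⟨i, rfl⟩, ha⟩
  rw [h, Finset.card_image_of_injective _ hg]
  rw [← YoungDiagram.rowLen_transpose]
  exact blk_fiber_card (by rw [transpose_card, hD]) a

omit hg in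
lemma lbl_snd_lt (i : Fin n) : (lbl D g i).2 < n := by
  have h1 : ((g⁻¹ i) : Fin n).val < D.card := by rw [hD]; exact (g⁻¹ i).isLt
  have := blk_lt_card D h1
  simpa [lbl, hD] using this

lemma lbl_count_lt (m : ℕ) :
    ((Finset.univ.image (lbl D g)).filter fun p => p.1 < m).card = psum D.transpose m := by
  set I := Finset.univ.image (lbl D g) with hI
  rw [card_eq_sum_fibers (I.filter fun p => p.1 < m) (fun p => p.1) m
    (fun p hp => (Finset.mem_filter.1 hp).2)]
  rw [psum]
  refine Finset.sum_congr rfl fun a ha => ?_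
  rw [Finset.filter_filter]
  have h : (I.filter fun p => p.1 < m ∧ p.1 = a) = I.filter fun p => p.1 = a := by
    apply Finset.filter_congr
    intro p _
    simp only [Finset.mem_range] at ha
    constructor
    · tauto
    · intro hpa; exact ⟨by omega, hpa⟩
  rw [h, lbl_fiber_fst hD hg a, YoungDiagram.rowLen_transpose]

lemma lbl_term_eq_min (b : ℕ) (hb : b < n) (m : ℕ) :
    ((Finset.univ.image (lbl D g)).filter fun p => p.1 < m ∧ p.2 = b).card
      = min (D.rowLen b) m := by
  set I := Finset.univ.image (lbl D g) with hI
  have hle : ∀ b' ∈ Finset.range n,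
      (I.filter fun p => p.1 < m ∧ p.2 = b').card ≤ min (D.rowLen b') m := by
    intro b' _
    refine le_min ?_ ?_
    · calc (I.filter fun p => p.1 < m ∧ p.2 = b').card
          ≤ (I.filter fun p => p.2 = b').card := by
            apply Finset.card_le_card
            intro p hp
            simp only [Finset.mem_filter] at hp ⊢
            exact ⟨hp.1, hp.2.2⟩
      _ = D.rowLen b' := lbl_fiber_snd hD hg b'
    · calc (I.filter fun p => p.1 < m ∧ p.2 = b').card
          = ((I.filter fun p => p.1 < m ∧ p.2 = b').image Prod.fst).card := by
            rw [Finset.card_image_of_injOn]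
            intro p hp q hq hpq
            simp only [Finset.mem_coe, Finset.mem_filter] at hp hq
            exact Prod.ext hpq (hp.2.2.trans hq.2.2.symm)
      _ ≤ (Finset.range m).card := by
            apply Finset.card_le_card
            intro x hx
            simp only [Finset.mem_image, Finset.mem_filter] at hx
            obtain ⟨p, ⟨-, hm', -⟩, rfl⟩ := hx
            simpa using hm'
      _ = m := Finset.card_range m
  have hsum : ∑ b' ∈ Finset.range n, (I.filter fun p => p.1 < m ∧ p.2 = b').card
      = ∑ b' ∈ Finset.range n, min (D.rowLen b') m := by
    rw [min_sum_eq hD m, ← lbl_count_lt hD hg m]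
    rw [card_eq_sum_fibers (I.filter fun p => p.1 < m) (fun p => p.2) n
      (fun p hp => by
        have hpI := (Finset.mem_filter.1 hp).1
        obtain ⟨i, -, rfl⟩ := Finset.mem_image.1 hpI
        exact lbl_snd_lt hD i)]
    refine Finset.sum_congr rfl fun b' _ => ?_
    rw [Finset.filter_filter]
  exact (Finset.sum_eq_sum_iff_of_le hle).1 hsum b (Finset.mem_range.2 hb)

lemma lbl_mem_cells (i : Fin n) : lbl D g i ∈ D.transpose.cells := by
  set I := Finset.univ.image (lbl D g) with hI
  set b := (lbl D g i).2 with hb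
  have hbn : b < n := lbl_snd_lt hD i
  have h1 : (I.filter fun p => p.1 < D.rowLen b ∧ p.2 = b).card
      = min (D.rowLen b) (D.rowLen b) := lbl_term_eq_min hD hg b hbn (D.rowLen b)
  rw [min_self] at h1
  have h2 : (I.filter fun p => p.1 < D.rowLen b ∧ p.2 = b)
      = I.filter fun p => p.2 = b := by
    apply Finset.eq_of_subset_of_card_le
    · intro p hp
      simp only [Finset.mem_filter] at hp ⊢
      exact ⟨hp.1, hp.2.2⟩
    · rw [h1, lbl_fiber_snd hD hg b]
  have hmem : lbl D g i ∈ I.filter fun p => p.2 = b :=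
    Finset.mem_filter.2 ⟨Finset.mem_image_of_mem _ (Finset.mem_univ i), rfl⟩
  rw [← h2] at hmem
  have := (Finset.mem_filter.1 hmem).2.1
  simp only [YoungDiagram.mem_cells, YoungDiagram.mem_transpose]
  rw [YoungDiagram.mem_iff_lt_rowLen]
  exact this

end Counting
section DoubleCoset

open Finset Equiv

variable {n : ℕ} {D : YoungDiagram}

lemma card_coe_cells (E : YoungDiagram) : Fintype.card E.cells = E.card := by
  simp [YoungDiagram.card]

/-- The label map as an equivalence onto the cells of the transpose, for a "bad" `g`. -/
noncomputable def lblEquiv (hD : D.card = n) (g : Equiv.Perm (Fin n))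
    (hg : Function.Injective (lbl D g)) : Fin n ≃ D.transpose.cells := by
  refine Equiv.ofBijective (fun i => ⟨lbl D g i, lbl_mem_cells hD hg i⟩) ?_
  rw [Fintype.bijective_iff_injective_and_card]
  constructor
  · intro i j hij
    exact hg (congrArg Subtype.val hij)
  · rw [card_coe_cells, transpose_card, hD, Fintype.card_fin]

lemma lblEquiv_spec (hD : D.card = n) (g : Equiv.Perm (Fin n))
    (hg : Function.Injective (lbl D g)) (i : Fin n) :
    ((lblEquiv hD g hg) i).val = lbl D g i := rfl

lemma bad_related (hD : D.card = n) {g g' : Equiv.Perm (Fin n)}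
    (hg : Function.Injective (lbl D g)) (hg' : Function.Injective (lbl D g')) :
    ∃ h k, h ∈ youngSubgroup n D.transpose ∧ k ∈ youngSubgroup n D ∧ g = h * g' * k := by
  set e := lblEquiv hD g hg
  set e' := lblEquiv hD g' hg'
  set h0 : Equiv.Perm (Fin n) := e.trans e'.symm with hh0
  have hkey : ∀ i, lbl D g' (h0 i) = lbl D g i := by
    intro i
    have : e' (h0 i) = e i := by
      simp [hh0]
    have := congrArg Subtype.val this
    rwa [lblEquiv_spec, lblEquiv_spec] at this
  have hH : h0 ∈ youngSubgroup n D.transpose := by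
    intro i
    have := congrArg Prod.fst (hkey i)
    exact this
  have hK : g'⁻¹ * h0 * g ∈ youngSubgroup n D := by
    intro x
    have h1 := congrArg Prod.snd (hkey (g x))
    simp only [lbl, Equiv.Perm.inv_def, Equiv.symm_apply_apply] at h1
    show blk D ((g'⁻¹ (h0 (g x))).val) = blk D x.val
    exact h1
  refine ⟨h0⁻¹, g'⁻¹ * h0 * g, (youngSubgroup n D.transpose).inv_mem hH, hK, ?_⟩
  group

lemma bad_rigid (hD : D.card = n) {g : Equiv.Perm (Fin n)}
    (hg : Function.Injective (lbl D g)) {h k : Equiv.Perm (Fin n)}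
    (hH : h ∈ youngSubgroup n D.transpose) (hK : k ∈ youngSubgroup n D)
    (heq : h * g * k = g) : h = 1 := by
  have hgk : ∀ x, g⁻¹ (h x) = k⁻¹ (g⁻¹ x) := by
    intro x
    have h1 : (h * g * k) (k⁻¹ (g⁻¹ x)) = g (k⁻¹ (g⁻¹ x)) := by rw [heq]
    simp only [Equiv.Perm.mul_apply, Equiv.Perm.inv_def, Equiv.apply_symm_apply] at h1
    rw [h1]
    simp
  ext i
  have : lbl D g (h i) = lbl D g i := by
    apply Prod.ext
    · exact hH i
    · show blk D ((g⁻¹ (h i)).val) = blk D ((g⁻¹ i).val)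
      rw [hgk i]
      exact (youngSubgroup n D).inv_mem hK (g⁻¹ i)
  have := hg this
  rw [this]
  rfl

lemma lbl_mul {g h k : Equiv.Perm (Fin n)}
    (hH : h ∈ youngSubgroup n D.transpose) (hK : k ∈ youngSubgroup n D) (i : Fin n) :
    lbl D (h * g * k) i = lbl D g (h⁻¹ i) := by
  apply Prod.ext
  · exact ((youngSubgroup n D.transpose).inv_mem hH i).symm
  · show blk D (((h * g * k)⁻¹ i).val) = blk D ((g⁻¹ (h⁻¹ i)).val)
    have : (h * g * k)⁻¹ i = k⁻¹ (g⁻¹ (h⁻¹ i)) := by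
      simp [mul_assoc]
    rw [this]
    exact (youngSubgroup n D).inv_mem hK _

lemma bad_mul {g : Equiv.Perm (Fin n)} (hg : Function.Injective (lbl D g))
    {h k : Equiv.Perm (Fin n)}
    (hH : h ∈ youngSubgroup n D.transpose) (hK : k ∈ youngSubgroup n D) :
    Function.Injective (lbl D (h * g * k)) := by
  intro i j hij
  rw [lbl_mul hH hK, lbl_mul hH hK] at hij
  have := hg hij
  simpa using this

/-- The canonical enumeration of a Young diagram by consecutive blocks. -/
lemma enum_mem (E : YoungDiagram) {i : ℕ} (hi : i < E.card) :
    (blk E i, i - psum E (blk E i)) ∈ E.cells := by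
  obtain ⟨h1, h2⟩ := blk_spec E hi
  rw [psum_succ] at h2
  simp only [YoungDiagram.mem_cells]
  rw [YoungDiagram.mem_iff_lt_rowLen]
  omega

lemma enum_inj (E : YoungDiagram) {i j : ℕ} (hi : i < E.card) (hj : j < E.card)
    (h : (blk E i, i - psum E (blk E i)) = (blk E j, j - psum E (blk E j))) : i = j := by
  obtain ⟨hi1, -⟩ := blk_spec E hi
  obtain ⟨hj1, -⟩ := blk_spec E hj
  have h1 : blk E i = blk E j := congrArg Prod.fst h
  have h2 : i - psum E (blk E i) = j - psum E (blk E j) := congrArg Prod.snd h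
  rw [h1] at hi1 h2
  omega

noncomputable def enumEquiv (E : YoungDiagram) {n : ℕ} (hE : E.card = n) :
    Fin n ≃ E.cells := by
  refine Equiv.ofBijective
    (fun i => ⟨(blk E i.val, i.val - psum E (blk E i.val)), enum_mem E (by omega)⟩) ?_
  rw [Fintype.bijective_iff_injective_and_card]
  constructor
  · intro i j hij
    have := enum_inj E (i := i.val) (j := j.val) (by omega) (by omega)
      (congrArg Subtype.val hij)
    exact Fin.ext this
  · rw [card_coe_cells, hE, Fintype.card_fin]

/-- Existence of a "bad" permutation: one whose label map is injective. -/
lemma exists_bad (hD : D.card = n) : ∃ g : Equiv.Perm (Fin n), Function.Injective (lbl D g) := by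
  have hDt : D.transpose.card = n := by rw [transpose_card, hD]
  set e1 := enumEquiv D.transpose hDt
  set e2 := enumEquiv D hD
  have hswap : ∀ c : ℕ × ℕ, c ∈ D.transpose.cells → c.swap ∈ D.cells := by
    intro c hc
    simpa using hc
  set s : D.transpose.cells ≃ D.cells :=
    { toFun := fun c => ⟨c.val.swap, hswap c.val c.2⟩
      invFun := fun c => ⟨c.val.swap, by
        have := c.2
        simp only [YoungDiagram.mem_cells, YoungDiagram.mem_transpose] at *
        simpa using this⟩
      left_inv := fun c => by simp
      right_inv := fun c => by simp } with hs
  set w : Equiv.Perm (Fin n) := (e1.trans (s.trans e2.symm)) with hw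
  refine ⟨w⁻¹, ?_⟩
  have hlbl : ∀ i, lbl D w⁻¹ i = (e1 i).val := by
    intro i
    have h2 : (e2 (w i)).val = (s (e1 i)).val := by
      simp [hw]
    have hfst : blk D ((w i).val) = (e1 i).val.2 := by
      have h3 := congrArg Prod.fst h2
      simpa [e2, enumEquiv, hs] using h3
    apply Prod.ext
    · rfl
    · show blk D ((w i).val) = (e1 i).val.2
      exact hfst
  intro i j hij
  rw [hlbl i, hlbl j] at hij
  exact e1.injective (Subtype.ext hij)

end DoubleCoset
section SignSpace

open Equiv

/-- The sign of a permutation, as a complex number. -/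
def sgnC {n : ℕ} (σ : Equiv.Perm (Fin n)) : ℂ := ((Equiv.Perm.sign σ : ℤ) : ℂ)

lemma sgnC_mul {n : ℕ} (σ τ : Equiv.Perm (Fin n)) : sgnC (σ * τ) = sgnC σ * sgnC τ := by
  unfold sgnC
  rw [_root_.map_mul]
  push_cast
  ring

lemma sgnC_one {n : ℕ} : sgnC (1 : Equiv.Perm (Fin n)) = 1 := by
  simp [sgnC]

lemma sgnC_sq {n : ℕ} (σ : Equiv.Perm (Fin n)) : sgnC σ * sgnC σ = 1 := by
  unfold sgnC
  rcases Int.units_eq_one_or (Equiv.Perm.sign σ) with h | h <;> rw [h] <;> norm_num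

lemma sgnC_inv {n : ℕ} (σ : Equiv.Perm (Fin n)) : sgnC σ⁻¹ = sgnC σ := by
  unfold sgnC
  rw [_root_.map_inv]
  rcases Int.units_eq_one_or (Equiv.Perm.sign σ) with h | h <;> rw [h] <;> norm_num

/-- The space of functions on `S_n` which transform under the sign character of
`S_{Dᵗ}` on the left and are invariant under `S_D` on the right. -/
def signSpace (n : ℕ) (D : YoungDiagram) : Submodule ℂ (Equiv.Perm (Fin n) → ℂ) where
  carrier := {c | ∀ h ∈ youngSubgroup n D.transpose, ∀ k ∈ youngSubgroup n D,
    ∀ g, c (h * g * k) = sgnC h * c g}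
  add_mem' := by
    intro a b ha hb h hH k hK g
    simp [ha h hH k hK g, hb h hH k hK g]
    ring
  zero_mem' := by intro h hH k hK g; simp
  smul_mem' := by
    intro r a ha h hH k hK g
    simp [ha h hH k hK g]
    ring

variable {n : ℕ} {D : YoungDiagram}

/-- A fixed "bad" permutation. -/
noncomputable def g0 (hD : D.card = n) : Equiv.Perm (Fin n) := (exists_bad hD).choose

lemma g0_bad (hD : D.card = n) : Function.Injective (lbl D (g0 hD)) :=
  (exists_bad hD).choose_spec

/-- The decomposition predicate : `g` lies in the distinguished double coset. -/
def Dec (hD : D.card = n) (g : Equiv.Perm (Fin n)) : Prop :=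
  ∃ h, h ∈ youngSubgroup n D.transpose ∧ ∃ k ∈ youngSubgroup n D, g = h * g0 hD * k

lemma dec_unique (hD : D.card = n) {g h h' k k' : Equiv.Perm (Fin n)}
    (hH : h ∈ youngSubgroup n D.transpose) (hK : k ∈ youngSubgroup n D)
    (hH' : h' ∈ youngSubgroup n D.transpose) (hK' : k' ∈ youngSubgroup n D)
    (e1 : g = h * g0 hD * k) (e2 : g = h' * g0 hD * k') : h = h' := by
  have heq : (h'⁻¹ * h) * g0 hD * (k * k'⁻¹) = g0 hD := by
    have : h * g0 hD * k = h' * g0 hD * k' := by rw [← e1, ← e2]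
    have h2 : h'⁻¹ * (h * g0 hD * k) * k'⁻¹ = h'⁻¹ * (h' * g0 hD * k') * k'⁻¹ := by rw [this]
    calc (h'⁻¹ * h) * g0 hD * (k * k'⁻¹) = h'⁻¹ * (h * g0 hD * k) * k'⁻¹ := by group
    _ = h'⁻¹ * (h' * g0 hD * k') * k'⁻¹ := h2
    _ = g0 hD := by group
  have := bad_rigid hD (g0_bad hD)
    ((youngSubgroup n D.transpose).mul_mem ((youngSubgroup n D.transpose).inv_mem hH') hH)
    ((youngSubgroup n D).mul_mem hK ((youngSubgroup n D).inv_mem hK')) heq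
  have h3 : h'⁻¹ * h = 1 := this
  calc h = h' * (h'⁻¹ * h) := by group
  _ = h' := by rw [h3]; group

lemma signSpace_vanish (hD : D.card = n) {c : Equiv.Perm (Fin n) → ℂ}
    (hc : c ∈ signSpace n D) (h0 : c (g0 hD) = 0) (g : Equiv.Perm (Fin n)) : c g = 0 := by
  by_cases hbad : Function.Injective (lbl D g)
  · obtain ⟨h, k, hH, hK, heq⟩ := bad_related hD hbad (g0_bad hD)
    rw [heq, hc h hH k hK, h0, mul_zero]
  · obtain ⟨h, k, hH, hK, hsgn, heq⟩ := exists_sign_fix g hbad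
    have h1 : c g = sgnC h * c g := by
      conv_lhs => rw [← heq]
      exact hc h hH k hK g
    have h2 : sgnC h = -1 := by unfold sgnC; rw [hsgn]; norm_num
    rw [h2] at h1
    have h3 : (2 : ℂ) * c g = 0 := by linear_combination h1
    have := mul_eq_zero.1 h3
    simpa using this

open scoped Classical in
/-- The canonical element of `signSpace`. -/
noncomputable def c0 (hD : D.card = n) : Equiv.Perm (Fin n) → ℂ := fun g =>
  if hg : Dec hD g then sgnC hg.choose else 0

lemma c0_spec (hD : D.card = n) {g h k : Equiv.Perm (Fin n)}
    (hH : h ∈ youngSubgroup n D.transpose) (hK : k ∈ youngSubgroup n D)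
    (heq : g = h * g0 hD * k) : c0 hD g = sgnC h := by
  have hg : Dec hD g := ⟨h, hH, k, hK, heq⟩
  classical
  rw [c0]
  rw [dif_pos hg]
  obtain ⟨hH', k', hK', heq'⟩ := hg.choose_spec
  rw [dec_unique hD hH' hK' hH hK heq' heq]

lemma c0_not (hD : D.card = n) {g : Equiv.Perm (Fin n)} (hg : ¬ Dec hD g) : c0 hD g = 0 := by
  classical
  rw [c0]
  rw [dif_neg hg]

lemma c0_g0 (hD : D.card = n) : c0 hD (g0 hD) = 1 := by
  rw [c0_spec hD (Subgroup.one_mem _) (Subgroup.one_mem _) (by group), sgnC_one]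

lemma c0_mem (hD : D.card = n) : c0 hD ∈ signSpace n D := by
  intro h hH k hK g
  by_cases hg : Dec hD g
  · obtain ⟨h', hH', k', hK', heq'⟩ := hg
    have heq2 : h * g * k = (h * h') * g0 hD * (k' * k) := by rw [heq']; group
    rw [c0_spec hD ((youngSubgroup n D.transpose).mul_mem hH hH')
      ((youngSubgroup n D).mul_mem hK' hK) heq2]
    rw [c0_spec hD hH' hK' heq']
    exact sgnC_mul h h'
  · rw [c0_not hD hg, c0_not hD ?_, mul_zero]
    intro ⟨h'', hH'', k'', hK'', heq''⟩
    apply hg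
    refine ⟨h⁻¹ * h'', (youngSubgroup n D.transpose).mul_mem
      ((youngSubgroup n D.transpose).inv_mem hH) hH'',
      k'' * k⁻¹, (youngSubgroup n D).mul_mem hK'' ((youngSubgroup n D).inv_mem hK), ?_⟩
    have : g = h⁻¹ * (h * g * k) * k⁻¹ := by group
    rw [this, heq'']
    group

lemma signSpace_finrank (hD : D.card = n) : Module.finrank ℂ (signSpace n D) = 1 := by
  have e : signSpace n D ≃ₗ[ℂ] ℂ := by
    refine LinearEquiv.ofBijective
      { toFun := fun c => c.1 (g0 hD)
        map_add' := by intro a b; rfl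
        map_smul' := by intro r a; rfl } ⟨?_, ?_⟩
    · intro c c' hcc'
      simp only [LinearMap.coe_mk, AddHom.coe_mk] at hcc'
      apply Subtype.ext
      funext g
      have hsub : c.1 g - c'.1 g = 0 := by
        have hmem : c.1 - c'.1 ∈ signSpace n D := (signSpace n D).sub_mem c.2 c'.2
        have := signSpace_vanish hD hmem (by simp [hcc']) g
        simpa using this
      exact sub_eq_zero.1 hsub
    · intro z
      refine ⟨⟨z • c0 hD, (signSpace n D).smul_mem z (c0_mem hD)⟩, ?_⟩
      simp [c0_g0 hD]
  rw [LinearEquiv.finrank_eq e, Module.finrank_self]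

end SignSpace
section Plumbing

open Finset Equiv CategoryTheory

variable {n : ℕ} {D : YoungDiagram}

/-- Shorthand for the relevant young subgroups. -/
local notation "HT" => youngSubgroup n (YoungDiagram.transpose D)
local notation "KD" => youngSubgroup n D

open scoped Classical in
/-- Raw function underlying the standard basis element of the induced representation. -/
noncomputable def eFun (D : YoungDiagram) {n : ℕ} (g y : Equiv.Perm (Fin n)) : ℂ :=
  if y * g⁻¹ ∈ youngSubgroup n D.transpose then sgnC (y * g⁻¹) else 0

lemma sgnRep_apply {n : ℕ} (H : Subgroup (Equiv.Perm (Fin n))) (h : H) (x : ℂ) :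
    sgnRep H h x = sgnC (h : Equiv.Perm (Fin n)) * x := by
  show algebraMap ℂ (ℂ →ₗ[ℂ] ℂ) _ x = _
  rw [Module.algebraMap_end_apply]
  rfl

lemma eFun_mem (g : Equiv.Perm (Fin n)) :
    eFun D g ∈ indSpace HT (sgnRep HT) := by
  classical
  intro h y
  rw [sgnRep_apply]
  show (if (h : Equiv.Perm (Fin n)) * y * g⁻¹ ∈ HT then sgnC ((h : Equiv.Perm (Fin n)) * y * g⁻¹) else 0)
    = sgnC (h : Equiv.Perm (Fin n)) * (if y * g⁻¹ ∈ HT then sgnC (y * g⁻¹) else 0)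
  have hmm : (h : Equiv.Perm (Fin n)) * y * g⁻¹ = (h : Equiv.Perm (Fin n)) * (y * g⁻¹) := by
    group
  rw [hmm]
  by_cases hy : y * g⁻¹ ∈ HT
  · rw [if_pos ((HT).mul_mem h.2 hy), if_pos hy, sgnC_mul]
  · rw [if_neg ?_, if_neg hy, mul_zero]
    intro hmem
    exact hy (by simpa using (HT).mul_mem ((HT).inv_mem h.2) hmem)

/-- The standard basis element of the induced representation. -/
noncomputable def eV (D : YoungDiagram) {n : ℕ} (g : Equiv.Perm (Fin n)) :
    (indSpace (youngSubgroup n D.transpose) (sgnRep (youngSubgroup n D.transpose))) :=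
  ⟨eFun D g, eFun_mem g⟩

lemma eFun_apply (g y : Equiv.Perm (Fin n)) [Decidable (y * g⁻¹ ∈ HT)] :
    eFun D g y = if y * g⁻¹ ∈ HT then sgnC (y * g⁻¹) else 0 := by
  unfold eFun; congr

/-- Transformation rule for the basis elements. -/
lemma eV_mul {h k : Equiv.Perm (Fin n)} (hH : h ∈ HT) (hK : k ∈ KD) (g : Equiv.Perm (Fin n)) :
    eV D (h * g * k) = sgnC h • ((sgnInduced n D.transpose).ρ k⁻¹ (eV D g)) := by
  classical
  apply Subtype.ext
  funext y
  show eFun D (h * g * k) y = sgnC h * eFun D g (y * k⁻¹)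
  rw [eFun_apply, eFun_apply]
  have hinv : y * (h * g * k)⁻¹ = (y * k⁻¹ * g⁻¹) * h⁻¹ := by group
  have hcond : y * (h * g * k)⁻¹ ∈ HT ↔ y * k⁻¹ * g⁻¹ ∈ HT := by
    rw [hinv]
    exact (HT).mul_mem_cancel_right ((HT).inv_mem hH)
  by_cases hy : y * k⁻¹ * g⁻¹ ∈ HT
  · rw [if_pos (hcond.2 hy), if_pos hy, hinv, sgnC_mul, sgnC_inv]
    ring
  · rw [if_neg (fun hmem => hy (hcond.1 hmem)), if_neg hy, mul_zero]

/-- Point of evaluation : the trivial coset. -/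
noncomputable def pt (n : ℕ) (D : YoungDiagram) : Equiv.Perm (Fin n) ⧸ youngSubgroup n D :=
  QuotientGroup.mk 1

/-- Identity coercion into the underlying space of the Young module. -/
def toFinsupp (x : (youngModule n D).V) :
    (Equiv.Perm (Fin n) ⧸ youngSubgroup n D) →₀ ℂ := x.coeff

/-- Identity coercion into the underlying space of the induced representation. -/
def toInd (f : (indSpace (youngSubgroup n D.transpose) (sgnRep (youngSubgroup n D.transpose)))) :
    (sgnInduced n D.transpose).V := f

lemma toFinsupp_linear (x y : (youngModule n D).V) (a b : ℂ) :
    toFinsupp (a • x + b • y) = a • toFinsupp x + b • toFinsupp y := rfl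

/-- The matrix coefficient function attached to an intertwiner. -/
noncomputable def alphaFun (T : sgnInduced n D.transpose ⟶ youngModule n D)
    (g : Equiv.Perm (Fin n)) : ℂ :=
  (toFinsupp (T.hom (toInd (eV D g)))) (pt n D)

lemma quotient_pt_eq {k : Equiv.Perm (Fin n)} (hK : k ∈ KD) :
    (QuotientGroup.mk k : Equiv.Perm (Fin n) ⧸ KD) = pt n D := by
  unfold pt
  rw [QuotientGroup.eq]
  simpa using hK

lemma ofMulAction_mk_apply (σ g : Equiv.Perm (Fin n))
    (F : (youngModule n D).V) :
    toFinsupp (Representation.ofMulAction ℂ (Equiv.Perm (Fin n)) (Equiv.Perm (Fin n) ⧸ KD) σ F)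
      (QuotientGroup.mk g) = toFinsupp F (QuotientGroup.mk (σ⁻¹ * g)) := by
  unfold toFinsupp
  exact Representation.coeff_ofMulAction σ F _

lemma alphaFun_mem (T : sgnInduced n D.transpose ⟶ youngModule n D) :
    alphaFun T ∈ signSpace n D := by
  intro h hH k hK g
  unfold alphaFun
  rw [eV_mul hH hK g]
  have h1 : T.hom (toInd (sgnC h • ((sgnInduced n D.transpose).ρ k⁻¹ (eV D g))))
      = sgnC h • ((youngModule n D).ρ k⁻¹ (T.hom (toInd (eV D g)))) := by
    have h2 : toInd (sgnC h • ((sgnInduced n D.transpose).ρ k⁻¹ (eV D g)))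
        = sgnC h • ((sgnInduced n D.transpose).ρ k⁻¹ (toInd (eV D g))) := rfl
    rw [h2, map_smul, Rep.hom_comm_apply]
  rw [h1]
  have h3 : toFinsupp (sgnC h • ((youngModule n D).ρ k⁻¹ (T.hom (toInd (eV D g)))))
      = sgnC h • toFinsupp ((youngModule n D).ρ k⁻¹ (T.hom (toInd (eV D g)))) := rfl
  rw [h3, Finsupp.smul_apply]
  congr 1
  show toFinsupp (Representation.ofMulAction ℂ (Equiv.Perm (Fin n)) (Equiv.Perm (Fin n) ⧸ KD) k⁻¹
    (T.hom (toInd (eV D g)))) (pt n D) = _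
  unfold pt
  rw [ofMulAction_mk_apply]
  congr 1
  rw [QuotientGroup.eq]
  simpa using (KD).inv_mem hK

/-- The size of the transposed Young subgroup, as a complex number. -/
noncomputable def cardHT (n : ℕ) (D : YoungDiagram) : ℂ :=
  (Nat.card (youngSubgroup n (YoungDiagram.transpose D)) : ℂ)

lemma cardHT_ne_zero : cardHT n D ≠ 0 := by
  unfold cardHT
  norm_cast
  have : 0 < Nat.card (youngSubgroup n (YoungDiagram.transpose D)) := Nat.card_pos
  omega

/-- Decomposition of an arbitrary element of the induced representation in terms of the
basis elements `eV`. -/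
lemma span_eV (f : (indSpace HT (sgnRep HT))) (g : Equiv.Perm (Fin n)) :
    cardHT n D • ((sgnInduced n D.transpose).ρ g⁻¹ (toInd f))
      = ∑ x : Equiv.Perm (Fin n), f.1 x • toInd (eV D (x * g)) := by
  classical
  show (cardHT n D • ((sgnInduced n D.transpose).ρ g⁻¹ (toInd f)) :
    (indSpace HT (sgnRep HT)))
    = ((∑ x : Equiv.Perm (Fin n), f.1 x • toInd (eV D (x * g))) :
      (indSpace HT (sgnRep HT)))
  apply Subtype.ext
  funext y
  have hrhs : ((∑ x : Equiv.Perm (Fin n), f.1 x • toInd (eV D (x * g)) :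
      (indSpace HT (sgnRep HT))) : Equiv.Perm (Fin n) → ℂ) y
      = ∑ x : Equiv.Perm (Fin n), f.1 x * eFun D (x * g) y := by
    show ((∑ x : Equiv.Perm (Fin n), f.1 x • eV D (x * g) :
      (indSpace HT (sgnRep HT))) : Equiv.Perm (Fin n) → ℂ) y = _
    rw [AddSubmonoidClass.coe_finset_sum, Finset.sum_apply]
    rfl
  show cardHT n D * f.1 (y * g⁻¹) = _
  rw [hrhs]
  have hbij : Function.Bijective (fun z : Equiv.Perm (Fin n) => z⁻¹ * (y * g⁻¹)) := by
    constructor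
    · intro a b hab
      simpa using hab
    · intro x
      exact ⟨(y * g⁻¹) * x⁻¹, by group⟩
  have hcompat : ∀ z : Equiv.Perm (Fin n),
      (if z ∈ HT then f.1 (y * g⁻¹) else 0)
        = f.1 (z⁻¹ * (y * g⁻¹)) * eFun D ((z⁻¹ * (y * g⁻¹)) * g) y := by
    intro z
    by_cases hz : z ∈ HT
    · rw [if_pos hz]
      have h1 : eFun D ((z⁻¹ * (y * g⁻¹)) * g) y = sgnC z := by
        rw [eFun_apply]
        have h2 : y * ((z⁻¹ * (y * g⁻¹)) * g)⁻¹ = z := by group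
        rw [h2, if_pos hz]
      rw [h1]
      have h3 : f.1 (z⁻¹ * (y * g⁻¹)) = sgnC z * f.1 (y * g⁻¹) := by
        have h4 := f.2 ⟨z⁻¹, (HT).inv_mem hz⟩ (y * g⁻¹)
        rw [sgnRep_apply] at h4
        rw [h4, sgnC_inv]
      rw [h3]
      rw [mul_comm (sgnC z) (f.1 (y * g⁻¹)), mul_assoc, sgnC_sq, mul_one]
    · rw [if_neg hz]
      have h1 : eFun D ((z⁻¹ * (y * g⁻¹)) * g) y = 0 := by
        rw [eFun_apply]
        have h2 : y * ((z⁻¹ * (y * g⁻¹)) * g)⁻¹ = z := by group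
        rw [h2, if_neg hz]
      rw [h1, mul_zero]
  have hsum := Fintype.sum_bijective _ hbij
    (fun z => if z ∈ HT then f.1 (y * g⁻¹) else 0)
    (fun x => f.1 x * eFun D (x * g) y) hcompat
  rw [← hsum, Finset.sum_ite, Finset.sum_const, Finset.sum_const_zero, add_zero, nsmul_eq_mul]
  congr 1
  have hc : (Finset.univ.filter (fun x => x ∈ HT)).card
      = Nat.card (youngSubgroup n (YoungDiagram.transpose D)) := by
    rw [Nat.card_eq_fintype_card, Fintype.card_subtype]
  rw [cardHT, hc]
lemma key_formula (T : sgnInduced n D.transpose ⟶ youngModule n D)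
    (f : (indSpace HT (sgnRep HT))) (g : Equiv.Perm (Fin n)) :
    cardHT n D * (toFinsupp (T.hom (toInd f))) (QuotientGroup.mk g)
      = ∑ x : Equiv.Perm (Fin n), f.1 x * alphaFun T (x * g) := by
  have e1 : T.hom (cardHT n D • ((sgnInduced n D.transpose).ρ g⁻¹ (toInd f)))
      = ∑ x : Equiv.Perm (Fin n), f.1 x • T.hom (toInd (eV D (x * g))) := by
    rw [span_eV, map_sum]
    refine Finset.sum_congr rfl fun x _ => ?_
    rw [map_smul]
  have e2 : cardHT n D * (toFinsupp (T.hom (toInd f))) (QuotientGroup.mk g)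
      = (toFinsupp (T.hom (cardHT n D • ((sgnInduced n D.transpose).ρ g⁻¹ (toInd f))))) (pt n D) := by
    rw [map_smul]
    have h2 : toFinsupp (cardHT n D • (T.hom (((sgnInduced n D.transpose).ρ g⁻¹ (toInd f)))))
        = cardHT n D • toFinsupp (T.hom (((sgnInduced n D.transpose).ρ g⁻¹ (toInd f)))) := rfl
    rw [h2, Finsupp.smul_apply, smul_eq_mul]
    congr 1
    have h3 : T.hom ((sgnInduced n D.transpose).ρ g⁻¹ (toInd f))
        = (youngModule n D).ρ g⁻¹ (T.hom (toInd f)) := Rep.hom_comm_apply T g⁻¹ (toInd f)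
    rw [h3]
    show toFinsupp (T.hom (toInd f)) (QuotientGroup.mk g) =
      toFinsupp (Representation.ofMulAction ℂ (Equiv.Perm (Fin n)) (Equiv.Perm (Fin n) ⧸ KD) g⁻¹
        (T.hom (toInd f))) (pt n D)
    unfold pt
    rw [ofMulAction_mk_apply]
    rw [inv_inv, mul_one]
  rw [e2, e1]
  have h4 : toFinsupp (∑ x : Equiv.Perm (Fin n), f.1 x • T.hom (toInd (eV D (x * g))))
      = ∑ x : Equiv.Perm (Fin n), f.1 x • toFinsupp (T.hom (toInd (eV D (x * g)))) := by
      unfold toFinsupp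
      exact MonoidAlgebra.coeff_sum _ _
  rw [h4, Finsupp.finset_sum_apply]
  refine Finset.sum_congr rfl fun x _ => ?_
  rw [Finsupp.smul_apply, smul_eq_mul]
  rfl

/-- The inverse construction : an intertwiner from a sign-equivariant function. -/
noncomputable def betaRaw (c : signSpace n D) (f : (indSpace HT (sgnRep HT))) :
    (Equiv.Perm (Fin n) ⧸ youngSubgroup n D) →₀ ℂ :=
  Finsupp.equivFunOnFinite.symm fun q =>
    Quotient.liftOn' q (fun g => (cardHT n D)⁻¹ * ∑ x : Equiv.Perm (Fin n), f.1 x * c.1 (x * g))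
    (by
      intro a b hab
      have hk : a⁻¹ * b ∈ youngSubgroup n D := QuotientGroup.leftRel_apply.1 hab
      show (cardHT n D)⁻¹ * ∑ x : Equiv.Perm (Fin n), f.1 x * c.1 (x * a)
        = (cardHT n D)⁻¹ * ∑ x : Equiv.Perm (Fin n), f.1 x * c.1 (x * b)
      congr 1
      refine Finset.sum_congr rfl fun x _ => ?_
      congr 1
      have hb : x * b = 1 * (x * a) * (a⁻¹ * b) := by group
      rw [hb, c.2 1 (Subgroup.one_mem _) (a⁻¹ * b) hk (x * a), sgnC_one, one_mul])

lemma betaRaw_mk (c : signSpace n D) (f : (indSpace HT (sgnRep HT)))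
    (g : Equiv.Perm (Fin n)) :
    betaRaw c f (QuotientGroup.mk g)
      = (cardHT n D)⁻¹ * ∑ x : Equiv.Perm (Fin n), f.1 x * c.1 (x * g) := by
  unfold betaRaw
  rw [Finsupp.coe_equivFunOnFinite_symm]
  rfl
/-- The intertwiner attached to a sign-equivariant function. -/
noncomputable def betaT (c : signSpace n D) :
    sgnInduced n D.transpose ⟶ youngModule n D :=
  ConcreteCategory.ofHom (C := Rep ℂ (Equiv.Perm (Fin n)))
    { toFun := fun f => MonoidAlgebra.ofCoeff (betaRaw c f)
      map_add' := by
        intro (f : indSpace HT (sgnRep HT)) (f' : indSpace HT (sgnRep HT))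
        apply MonoidAlgebra.coeff_injective
        apply Finsupp.ext
        intro q
        refine QuotientGroup.induction_on q ?_
        intro g
        show betaRaw c (f + f') (QuotientGroup.mk g)
          = (betaRaw c f + betaRaw c f') (QuotientGroup.mk g)
        rw [Finsupp.add_apply, betaRaw_mk, betaRaw_mk, betaRaw_mk]
        have h1 : ∀ x : Equiv.Perm (Fin n), (f + f').1 x = f.1 x + f'.1 x := fun x => rfl
        rw [← mul_add, ← Finset.sum_add_distrib]
        congr 1
        refine Finset.sum_congr rfl fun x _ => ?_
        rw [h1, add_mul]
      map_smul' := by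
        intro r (f : indSpace HT (sgnRep HT))
        apply MonoidAlgebra.coeff_injective
        apply Finsupp.ext
        intro q
        refine QuotientGroup.induction_on q ?_
        intro g
        show betaRaw c (r • f) (QuotientGroup.mk g)
          = (r • betaRaw c f) (QuotientGroup.mk g)
        rw [Finsupp.smul_apply, betaRaw_mk, betaRaw_mk, smul_eq_mul]
        have h1 : ∀ x : Equiv.Perm (Fin n), (r • f).1 x = r * f.1 x := fun x => rfl
        have hsum : ∑ x : Equiv.Perm (Fin n), (r • f).1 x * c.1 (x * g)
            = r * ∑ x : Equiv.Perm (Fin n), f.1 x * c.1 (x * g) := by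
          rw [Finset.mul_sum]
          refine Finset.sum_congr rfl fun x _ => ?_
          rw [h1, mul_assoc]
        rw [hsum]
        ring
      isIntertwining' := by
        intro σ0
        refine LinearMap.ext fun f => ?_
        have main : ∀ σ : Equiv.Perm (Fin n), betaRaw c ((sgnInduced n D.transpose).ρ σ f)
              = toFinsupp ((youngModule n D).ρ σ (MonoidAlgebra.ofCoeff (betaRaw c f))) := by
          intro σ
          apply Finsupp.ext
          intro q
          refine QuotientGroup.induction_on q ?_
          intro g
          have hrhs : toFinsupp ((youngModule n D).ρ σ (MonoidAlgebra.ofCoeff (betaRaw c f))) (QuotientGroup.mk g)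
              = betaRaw c f (QuotientGroup.mk (σ⁻¹ * g)) := ofMulAction_mk_apply σ g _
          rw [hrhs, betaRaw_mk c ((sgnInduced n D.transpose).ρ σ f)]
          refine Eq.trans ?_ (betaRaw_mk c f (σ⁻¹ * g)).symm
          congr 1
          have hbij : Function.Bijective (fun z : Equiv.Perm (Fin n) => z * σ) := by
            constructor
            · intro a b hab; simpa using hab
            · intro x; exact ⟨x * σ⁻¹, by group⟩
          refine Fintype.sum_bijective _ hbij _ _ ?_
          intro x
          show ((sgnInduced n D.transpose).ρ σ f : (indSpace HT (sgnRep HT))).1 x * c.1 (x * g)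
            = f.1 (x * σ) * c.1 ((x * σ) * (σ⁻¹ * g))
          have h2 : (x * σ) * (σ⁻¹ * g) = x * g := by group
          rw [h2]
          rfl
        exact congrArg MonoidAlgebra.ofCoeff (main σ0) }

lemma alpha_beta_fun (c : signSpace n D) (g : Equiv.Perm (Fin n)) :
    alphaFun (betaT c) g = c.1 g := by
  classical
  show betaRaw c (eV D g) (QuotientGroup.mk 1) = c.1 g
  rw [betaRaw_mk]
  have hbij : Function.Bijective (fun z : Equiv.Perm (Fin n) => z * g) := by
    constructor
    · intro a b hab; simpa using hab
    · intro x; exact ⟨x * g⁻¹, by group⟩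
  have hsum : ∑ z : Equiv.Perm (Fin n), (if z ∈ HT then c.1 g else 0)
      = ∑ x : Equiv.Perm (Fin n), (eV D g).1 x * c.1 (x * 1) := by
    refine Fintype.sum_bijective _ hbij _ _ ?_
    intro z
    show (if z ∈ HT then c.1 g else 0) = eFun D g (z * g) * c.1 ((z * g) * 1)
    rw [eFun_apply]
    have h1 : (z * g) * g⁻¹ = z := by group
    have h2 : (z * g) * 1 = z * g * 1 := by group
    rw [h1]
    by_cases hz : z ∈ HT
    · rw [if_pos hz, if_pos hz]
      rw [c.2 z hz 1 (Subgroup.one_mem _) g]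
      rw [← mul_assoc, sgnC_sq, one_mul]
    · rw [if_neg hz, if_neg hz, zero_mul]
  rw [← hsum, Finset.sum_ite, Finset.sum_const, Finset.sum_const_zero, add_zero, nsmul_eq_mul]
  have hc : ((Finset.univ.filter (fun x => x ∈ HT)).card : ℂ) = cardHT n D := by
    rw [cardHT]
    congr 1
    rw [Nat.card_eq_fintype_card, Fintype.card_subtype]
  rw [hc, inv_mul_cancel_left₀ cardHT_ne_zero]

lemma beta_alpha_hom (T : sgnInduced n D.transpose ⟶ youngModule n D) :
    betaT ⟨alphaFun T, alphaFun_mem T⟩ = T := by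
  apply Rep.hom_ext
  apply Representation.IntertwiningMap.ext
  refine LinearMap.ext fun (f : indSpace HT (sgnRep HT)) => ?_
  apply MonoidAlgebra.coeff_injective
  apply Finsupp.ext
  intro q
  refine QuotientGroup.induction_on q ?_
  intro g
  show betaRaw ⟨alphaFun T, alphaFun_mem T⟩ f (QuotientGroup.mk g)
    = toFinsupp (T.hom (toInd f)) (QuotientGroup.mk g)
  rw [betaRaw_mk]
  have := key_formula T f g
  rw [← this, inv_mul_cancel_left₀ cardHT_ne_zero]

/-- The space of intertwiners is linearly equivalent to the sign-equivariant function space. -/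
noncomputable def homEquiv :
    (sgnInduced n D.transpose ⟶ youngModule n D) ≃ₗ[ℂ] signSpace n D := by
  refine LinearEquiv.ofBijective
    { toFun := fun T => ⟨alphaFun T, alphaFun_mem T⟩
      map_add' := by
        intro T T'
        apply Subtype.ext
        funext g
        show toFinsupp ((T + T').hom (toInd (eV D g))) (pt n D) = _
        rw [Rep.add_hom]
        show (toFinsupp (T.hom (toInd (eV D g))) + toFinsupp (T'.hom (toInd (eV D g)))) (pt n D) = _
        rw [Finsupp.add_apply]
        rfl
      map_smul' := by
        intro r T
        apply Subtype.ext
        funext g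
        show toFinsupp ((r • T).hom (toInd (eV D g))) (pt n D) = _
        rw [Rep.smul_hom]
        show (r • toFinsupp (T.hom (toInd (eV D g)))) (pt n D) = _
        rw [Finsupp.smul_apply]
        rfl } ⟨?_, ?_⟩
  · intro T T' hTT'
    simp only [LinearMap.coe_mk, AddHom.coe_mk] at hTT'
    rw [← beta_alpha_hom T, ← beta_alpha_hom T', hTT']
  · intro c
    refine ⟨betaT c, ?_⟩
    apply Subtype.ext
    funext g
    exact alpha_beta_fun c g
end Plumbing
/-- `⟨Ind_{S_{Dᵗ}}^{S_n}(sgn), Ind_{S_D}^{S_n}(1)⟩ = 1`. -/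
theorem intertwining_transpose_eq_one (n : ℕ) (D : YoungDiagram) (hD : D.card = n) :
    interNum (sgnInduced n D.transpose) (youngModule n D) = 1 := by
  unfold interNum
  rw [LinearEquiv.finrank_eq (homEquiv (n := n) (D := D)), signSpace_finrank hD]
end PieriGL
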